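/- arXiv:2501.19396 — 4 statements merged into one kernel-verified Lean document; each statement's English description precedes it below -/
import Mathlib

section
/- For all x, y > 0, with f(x) = (e^x − 1)⁻¹, one has y²(f(x) − f(y))² ≤ 4(x−y)²(x⁻² + y⁻²). -/
open Real

lemma exp_sub_one_ge (t : ℝ) (ht : 0 < t) : t * Real.exp (t / 2) ≤ Real.exp t - 1 := by
  have hs : t / 2 ≤ Real.sinh (t / 2) := le_of_lt ((Real.self_lt_sinh_iff).2 (by linarith))
  have h2 : Real.exp t - 1 = Real.exp (t / 2) * (2 * Real.sinh (t / 2)) := by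
    rw [Real.sinh_eq]
    have : Real.exp (t/2) * Real.exp (t/2) = Real.exp t := by
      rw [← Real.exp_add]; ring_nf
    have h3 : Real.exp (t/2) * Real.exp (-(t/2)) = 1 := by
      rw [← Real.exp_add]; simp
    nlinarith [this, h3]
  rw [h2]
  have := Real.exp_pos (t/2)
  nlinarith

lemma key_deriv (t : ℝ) (ht : 0 < t) :
    HasDerivAt (fun s : ℝ => (Real.exp s - 1)⁻¹ - s⁻¹)
      (-(Real.exp t) / (Real.exp t - 1) ^ 2 - (-1 / t ^ 2)) t := by
  have hne : Real.exp t - 1 ≠ 0 := by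
    have : 1 < Real.exp t := by rw [← Real.exp_zero]; exact Real.exp_lt_exp.2 ht
    linarith
  have h1 : HasDerivAt (fun s : ℝ => Real.exp s - 1) (Real.exp t) t :=
    (Real.hasDerivAt_exp t).sub_const 1
  have h2 := h1.inv hne
  have h3 : HasDerivAt (fun s : ℝ => s⁻¹) (-1 / t ^ 2) t := by
    exact (hasDerivAt_inv (ne_of_gt ht)).congr_deriv (by ring)
  exact h2.sub h3

lemma phi_mono : MonotoneOn (fun s : ℝ => (Real.exp s - 1)⁻¹ - s⁻¹) (Set.Ioi 0) := by
  have hint : interior (Set.Ioi (0:ℝ)) = Set.Ioi 0 := interior_Ioi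
  apply monotoneOn_of_deriv_nonneg (convex_Ioi 0)
  · intro t ht
    exact ((key_deriv t ht).continuousAt).continuousWithinAt
  · rw [hint]
    intro t ht
    exact (key_deriv t ht).differentiableAt.differentiableWithinAt
  · rw [hint]
    intro t ht
    rw [(key_deriv t ht).deriv]
    have h1 := exp_sub_one_ge t ht
    have he : (0:ℝ) < Real.exp t - 1 := by
      have : 1 < Real.exp t := by rw [← Real.exp_zero]; exact Real.exp_lt_exp.2 ht
      linarith
    have hsq : t ^ 2 * Real.exp t ≤ (Real.exp t - 1) ^ 2 := by
      have hh : Real.exp (t/2) * Real.exp (t/2) = Real.exp t := by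
        rw [← Real.exp_add]; ring_nf
      nlinarith [Real.exp_pos (t/2), mul_pos ht (Real.exp_pos (t/2))]
    rw [div_sub_div _ _ (pow_ne_zero 2 (ne_of_gt he)) (pow_ne_zero 2 (ne_of_gt ht))]
    apply div_nonneg _ (by positivity)
    nlinarith

/-- For all `x, y > 0`, with `f(x) = (e^x - 1)⁻¹`, one has
`y² (f x - f y)² ≤ 4 (x - y)² (x⁻² + y⁻²)`. -/
theorem stmt_2 (x y : ℝ) (hx : 0 < x) (hy : 0 < y) :
    y ^ 2 * ((Real.exp x - 1)⁻¹ - (Real.exp y - 1)⁻¹) ^ 2 ≤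
      4 * (x - y) ^ 2 * ((x ^ 2)⁻¹ + (y ^ 2)⁻¹) := by
  have key : ∀ a b : ℝ, 0 < a → a ≤ b →
      ((Real.exp a - 1)⁻¹ - (Real.exp b - 1)⁻¹) ^ 2 ≤ (a⁻¹ - b⁻¹) ^ 2 := by
    intro a b ha hab
    have hb : 0 < b := lt_of_lt_of_le ha hab
    have hea : (0:ℝ) < Real.exp a - 1 := by
      have : 1 < Real.exp a := by rw [← Real.exp_zero]; exact Real.exp_lt_exp.2 ha
      linarith
    have heb : (0:ℝ) < Real.exp b - 1 := by
      have : 1 < Real.exp b := by rw [← Real.exp_zero]; exact Real.exp_lt_exp.2 hb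
      linarith
    have hanti : (Real.exp b - 1)⁻¹ ≤ (Real.exp a - 1)⁻¹ := by
      apply inv_anti₀ hea
      have := Real.exp_le_exp.2 hab
      linarith
    have hmono := phi_mono (Set.mem_Ioi.2 ha) (Set.mem_Ioi.2 hb) hab
    simp only at hmono
    have hub : (Real.exp a - 1)⁻¹ - (Real.exp b - 1)⁻¹ ≤ a⁻¹ - b⁻¹ := by linarith
    have hlb : (0:ℝ) ≤ (Real.exp a - 1)⁻¹ - (Real.exp b - 1)⁻¹ := by linarith
    nlinarith
  have bound : y ^ 2 * (x⁻¹ - y⁻¹) ^ 2 ≤ 4 * (x - y) ^ 2 * ((x ^ 2)⁻¹ + (y ^ 2)⁻¹) := by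
    have h2 : y ^ 2 * (x⁻¹ - y⁻¹) ^ 2 = (x - y) ^ 2 * (x ^ 2)⁻¹ := by
      field_simp
      ring
    rw [h2]
    have hx2 : (0:ℝ) ≤ (x ^ 2)⁻¹ := by positivity
    have hy2 : (0:ℝ) ≤ (y ^ 2)⁻¹ := by positivity
    nlinarith [mul_nonneg (sq_nonneg (x - y)) hx2, mul_nonneg (sq_nonneg (x - y)) hy2]
  rcases le_total x y with h | h
  · have := key x y hx h
    nlinarith [sq_nonneg y]
  · have := key y x hy h
    have heq : ((Real.exp x - 1)⁻¹ - (Real.exp y - 1)⁻¹) ^ 2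
        = ((Real.exp y - 1)⁻¹ - (Real.exp x - 1)⁻¹) ^ 2 := by ring
    have heq2 : (x⁻¹ - y⁻¹) ^ 2 = (y⁻¹ - x⁻¹) ^ 2 := by ring
    rw [heq]
    nlinarith [sq_nonneg y]
end

section
/- Let A, B be hermitian matrices (or bounded self-adjoint operators with e^{−A} trace class) and define f(s) = Tr[B e^{−sA} B e^{−(1−s)A}] for s ∈ [0,1]. Then f''(s) = Tr(|e^{−sA/2}[B,A]e^{−(1−s)A/2}|²) ≥ 0, so f is convex on [0,1], and f satisfies f(s) = f(1−s). -/
open Matrix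

/-- Convexity and symmetry of the Duhamel correlation function: for Hermitian matrices
`A, B` and `f(s) = Tr[B e^{-sA} B e^{-(1-s)A}]`, `f` is convex on `[0,1]`, symmetric
under `s ↦ 1-s`, and `f''(s) = Tr(|e^{-sA/2}[B,A]e^{-(1-s)A/2}|²) ≥ 0`
(with `[B,A] = BA - AB` and `|X|² = Xᴴ X`). -/
theorem stmt_9 {n : ℕ} (A B : Matrix (Fin n) (Fin n) ℂ)
    (hA : A.IsHermitian) (hB : B.IsHermitian) (f : ℝ → ℝ)
    (hf : ∀ s : ℝ, f s =
      ((B * NormedSpace.exp ((-s) • A) * B * NormedSpace.exp ((-(1 - s)) • A)).trace).re) :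
    ConvexOn ℝ (Set.Icc (0 : ℝ) 1) f ∧
    (∀ s : ℝ, f s = f (1 - s)) ∧
    (∀ s : ℝ,
      iteratedDeriv 2 f s =
        (((NormedSpace.exp ((-(s / 2)) • A) * (B * A - A * B) *
              NormedSpace.exp ((-((1 - s) / 2)) • A))ᴴ *
            (NormedSpace.exp ((-(s / 2)) • A) * (B * A - A * B) *
              NormedSpace.exp ((-((1 - s) / 2)) • A))).trace).re ∧
      0 ≤ iteratedDeriv 2 f s) := by
  classical
  set lam : Fin n → ℝ := hA.eigenvalues with hlamdef
  set U : Matrix (Fin n) (Fin n) ℂ := (hA.eigenvectorUnitary : Matrix (Fin n) (Fin n) ℂ)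
    with hUdef
  have hU1 : U * Uᴴ = 1 := by
    have := hA.eigenvectorUnitary.2
    rw [Matrix.mem_unitaryGroup_iff] at this
    simpa [Matrix.star_eq_conjTranspose] using this
  have hU2 : Uᴴ * U = 1 := by
    have := hA.eigenvectorUnitary.2
    rw [Matrix.mem_unitaryGroup_iff'] at this
    simpa [Matrix.star_eq_conjTranspose] using this
  have hUunit : IsUnit U := ⟨⟨U, Uᴴ, hU1, hU2⟩, rfl⟩
  have hUinv : U⁻¹ = Uᴴ := Matrix.inv_eq_right_inv hU1
  -- exponential in eigenbasis
  have expA : ∀ t : ℝ, NormedSpace.exp ((-t) • A) =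
      U * diagonal (fun i => (Real.exp (-t * lam i) : ℂ)) * Uᴴ := by
    intro t
    have hsmul : (-t) • A = U * diagonal (fun i => ((-t * lam i : ℝ) : ℂ)) * U⁻¹ := by
      rw [hUinv]
      conv_lhs => rw [hA.spectral_theorem]
      rw [Unitary.conjStarAlgAut_apply, Matrix.star_eq_conjTranspose, ← smul_mul_assoc, ← mul_smul_comm]
      congr 1
      congr 1
      rw [← Matrix.diagonal_smul]
      refine congrArg diagonal (funext fun i => ?_)
      simp only [Pi.smul_apply, Function.comp_apply, Complex.real_smul]
      norm_num [RCLike.ofReal, Complex.real_smul, hlamdef]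
    have hvec : (NormedSpace.exp fun i => ((-t * lam i : ℝ) : ℂ))
        = fun i => (Real.exp (-t * lam i) : ℂ) := by
      funext i
      rw [Pi.coe_exp, ← Complex.exp_eq_exp_ℂ, Complex.ofReal_exp]
    rw [hsmul, Matrix.exp_conj U _ hUunit, Matrix.exp_diagonal, hvec, hUinv]
  -- conjugation helpers
  have conj_mul : ∀ X Y : Matrix (Fin n) (Fin n) ℂ,
      (U * X * Uᴴ) * (U * Y * Uᴴ) = U * (X * Y) * Uᴴ := by
    intro X Y
    simp only [Matrix.mul_assoc]
    rw [← Matrix.mul_assoc Uᴴ U, hU2, Matrix.one_mul]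
  have traceU : ∀ X : Matrix (Fin n) (Fin n) ℂ, (U * X * Uᴴ).trace = X.trace := by
    intro X
    rw [Matrix.trace_mul_cycle, hU2, Matrix.one_mul]
  set B' : Matrix (Fin n) (Fin n) ℂ := Uᴴ * B * U with hB'def
  have hB'herm : B'.IsHermitian := Matrix.isHermitian_conjTranspose_mul_mul U hB
  have hB'apply : ∀ i j, B' j i = (starRingEnd ℂ) (B' i j) := by
    intro i j
    have := hB'herm.apply j i
    rw [← this]
    simp
  have hBU : B = U * B' * Uᴴ := by
    rw [hB'def]
    rw [← Matrix.mul_assoc, ← Matrix.mul_assoc, hU1, Matrix.one_mul, Matrix.mul_assoc, hU1,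
      Matrix.mul_one]
  -- the scalar term lemma
  have term_eq : ∀ (z : ℂ) (x y : ℝ),
      ((z * (x : ℂ)) * ((starRingEnd ℂ) z * (y : ℂ))).re = Complex.normSq z * (x * y) := by
    intro z x y
    have h : (z * (x : ℂ)) * ((starRingEnd ℂ) z * (y : ℂ))
        = ((Complex.normSq z * (x * y) : ℝ) : ℂ) := by
      push_cast
      rw [← Complex.mul_conj]
      ring
    rw [h, Complex.ofReal_re]
  -- the series form of f
  have hfF : ∀ s : ℝ, f s = ∑ i, ∑ j, Complex.normSq (B' i j) *
      Real.exp (-lam i + s * (lam i - lam j)) := by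
    intro s
    have h1 : ∀ (X Z : Matrix (Fin n) (Fin n) ℂ), (X * Z).trace = ∑ i, ∑ j, X i j * Z j i := by
      intro X Z
      simp [Matrix.trace, Matrix.diag, Matrix.mul_apply]
    have hmat : ∀ d e : Fin n → ℂ,
        B * (U * diagonal d * Uᴴ) * B * (U * diagonal e * Uᴴ)
          = U * (B' * diagonal d * (B' * diagonal e)) * Uᴴ := by
      intro d e
      conv_lhs => rw [hBU]
      rw [conj_mul B' (diagonal d), conj_mul (B' * diagonal d) B',
        conj_mul (B' * diagonal d * B') (diagonal e),
        Matrix.mul_assoc (B' * diagonal d) B' (diagonal e)]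
    rw [hf s, expA s, expA (1 - s), hmat, traceU, h1]
    simp only [Complex.re_sum]
    refine Finset.sum_congr rfl fun i _ => Finset.sum_congr rfl fun j _ => ?_
    rw [Matrix.mul_diagonal, Matrix.mul_diagonal, hB'apply i j, term_eq, ← Real.exp_add]
    congr 2
    ring
  -- derivatives
  have hder : ∀ s : ℝ, HasDerivAt
      (fun u : ℝ => ∑ i, ∑ j, Complex.normSq (B' i j) * Real.exp (-lam i + u * (lam i - lam j)))
      (∑ i, ∑ j, Complex.normSq (B' i j) *
        (Real.exp (-lam i + s * (lam i - lam j)) * (lam i - lam j))) s := by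
    intro s
    refine HasDerivAt.fun_sum fun i _ => HasDerivAt.fun_sum fun j _ => ?_
    have h0 : HasDerivAt (fun u : ℝ => -lam i + u * (lam i - lam j)) (lam i - lam j) s := by
      simpa using ((hasDerivAt_id s).mul_const (lam i - lam j)).const_add (-lam i)
    exact h0.exp.const_mul _
  have hder1 : ∀ s : ℝ, HasDerivAt
      (fun u : ℝ => ∑ i, ∑ j, Complex.normSq (B' i j) *
        (Real.exp (-lam i + u * (lam i - lam j)) * (lam i - lam j)))
      (∑ i, ∑ j, Complex.normSq (B' i j) *
        (Real.exp (-lam i + s * (lam i - lam j)) * (lam i - lam j) * (lam i - lam j))) s := by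
    intro s
    refine HasDerivAt.fun_sum fun i _ => HasDerivAt.fun_sum fun j _ => ?_
    have h0 : HasDerivAt (fun u : ℝ => -lam i + u * (lam i - lam j)) (lam i - lam j) s := by
      simpa using ((hasDerivAt_id s).mul_const (lam i - lam j)).const_add (-lam i)
    exact (h0.exp.mul_const _).const_mul _
  have hfeq : f = fun u : ℝ => ∑ i, ∑ j, Complex.normSq (B' i j) *
      Real.exp (-lam i + u * (lam i - lam j)) := funext hfF
  have hF' : deriv f = fun s : ℝ => ∑ i, ∑ j, Complex.normSq (B' i j) *
      (Real.exp (-lam i + s * (lam i - lam j)) * (lam i - lam j)) := by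
    rw [hfeq]
    exact funext fun s => (hder s).deriv
  have hF2 : ∀ s : ℝ, deriv (deriv f) s = ∑ i, ∑ j, Complex.normSq (B' i j) *
      (Real.exp (-lam i + s * (lam i - lam j)) * (lam i - lam j) * (lam i - lam j)) := by
    intro s
    rw [hF']
    exact (hder1 s).deriv
  have hF2nonneg : ∀ s : ℝ, 0 ≤ ∑ i, ∑ j, Complex.normSq (B' i j) *
      (Real.exp (-lam i + s * (lam i - lam j)) * (lam i - lam j) * (lam i - lam j)) := by
    intro s
    refine Finset.sum_nonneg fun i _ => Finset.sum_nonneg fun j _ => ?_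
    refine mul_nonneg (Complex.normSq_nonneg _) ?_
    rw [mul_assoc]
    exact mul_nonneg (Real.exp_pos _).le (mul_self_nonneg _)
  refine ⟨?_, ?_, ?_⟩
  · -- convexity
    have hdiff : Differentiable ℝ f := by
      rw [hfeq]; exact fun s => (hder s).differentiableAt
    have hdiff1 : Differentiable ℝ (deriv f) := by
      rw [hF']; exact fun s => (hder1 s).differentiableAt
    refine convexOn_of_deriv2_nonneg (convex_Icc 0 1) hdiff.continuous.continuousOn
      hdiff.differentiableOn hdiff1.differentiableOn fun x _ => ?_
    rw [show deriv^[2] f = deriv (deriv f) by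
      rw [Function.iterate_succ_apply', Function.iterate_one]]
    rw [hF2 x]
    exact hF2nonneg x
  · -- symmetry
    intro s
    rw [hfF s, hfF (1 - s)]
    conv_rhs => rw [Finset.sum_comm]
    refine Finset.sum_congr rfl fun i _ => Finset.sum_congr rfl fun j _ => ?_
    rw [hB'apply i j, Complex.normSq_conj]
    congr 2
    ring
  · -- second derivative
    intro s
    have hit : iteratedDeriv 2 f s = ∑ i, ∑ j, Complex.normSq (B' i j) *
        (Real.exp (-lam i + s * (lam i - lam j)) * (lam i - lam j) * (lam i - lam j)) := by
      rw [iteratedDeriv_succ, iteratedDeriv_one, hF2 s]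
    refine ⟨?_, by rw [hit]; exact hF2nonneg s⟩
    rw [hit]
    -- express the trace side in the eigenbasis
    set D : Matrix (Fin n) (Fin n) ℂ := diagonal (fun i => (lam i : ℂ)) with hDdef
    have hdiag : (diagonal (RCLike.ofReal ∘ lam) : Matrix (Fin n) (Fin n) ℂ) = D := by
      refine congrArg diagonal (funext fun i => ?_)
      simp only [Function.comp_apply]
      norm_num [RCLike.ofReal, hDdef]
    have hAU : A = U * D * Uᴴ := by
      conv_lhs => rw [hA.spectral_theorem]
      rw [Unitary.conjStarAlgAut_apply, Matrix.star_eq_conjTranspose, hdiag]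
    have hC : B * A - A * B = U * (B' * D - D * B') * Uᴴ := by
      rw [hBU, hAU, conj_mul, conj_mul, ← Matrix.sub_mul, ← Matrix.mul_sub]
    set Y : Matrix (Fin n) (Fin n) ℂ :=
      diagonal (fun i => (Real.exp (-(s / 2) * lam i) : ℂ)) * (B' * D - D * B') *
        diagonal (fun i => (Real.exp (-((1 - s) / 2) * lam i) : ℂ)) with hYdef
    have hX : NormedSpace.exp ((-(s / 2)) • A) * (B * A - A * B) *
        NormedSpace.exp ((-((1 - s) / 2)) • A) = U * Y * Uᴴ := by
      rw [expA (s / 2), expA ((1 - s) / 2), hC, conj_mul, conj_mul, hYdef]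
    rw [hX]
    have hXH : (U * Y * Uᴴ)ᴴ = U * Yᴴ * Uᴴ := by
      simp [Matrix.conjTranspose_mul, Matrix.mul_assoc]
    rw [hXH, conj_mul, traceU]
    have htr : (Yᴴ * Y).trace = ∑ j, ∑ i, (starRingEnd ℂ) (Y i j) * Y i j := by
      simp [Matrix.trace, Matrix.diag, Matrix.mul_apply, Matrix.conjTranspose_apply]
    rw [htr]
    simp only [Complex.re_sum]
    refine Finset.sum_congr rfl fun i _ => Finset.sum_congr rfl fun j _ => ?_
    -- now a scalar computation: compare term (i,j) on LHS with term (j,i) of the trace sum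
    have hY : Y j i = (B' j i) * ((Real.exp (-(s / 2) * lam j) * Real.exp (-((1 - s) / 2) * lam i)
        : ℝ) : ℂ) * (((lam i : ℝ) : ℂ) - ((lam j : ℝ) : ℂ)) := by
      simp only [hYdef, hDdef, Matrix.mul_diagonal, Matrix.diagonal_mul, Matrix.sub_apply]
      push_cast
      ring
    rw [hY]
    have key : ∀ (z : ℂ) (x a b : ℝ),
        ((starRingEnd ℂ) (z * (x : ℂ) * (((a : ℝ) : ℂ) - ((b : ℝ) : ℂ))) *
          (z * (x : ℂ) * (((a : ℝ) : ℂ) - ((b : ℝ) : ℂ)))).re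
        = Complex.normSq z * ((x * x) * ((a - b) * (a - b))) := by
      intro z x a b
      have h1 : z * (x : ℂ) * (((a : ℝ) : ℂ) - ((b : ℝ) : ℂ)) = z * ((x * (a - b) : ℝ) : ℂ) := by
        push_cast; ring
      rw [h1, _root_.map_mul, Complex.conj_ofReal]
      have h2 : (starRingEnd ℂ) z * ((x * (a - b) : ℝ) : ℂ) * (z * ((x * (a - b) : ℝ) : ℂ))
          = ((Complex.normSq z * ((x * x) * ((a - b) * (a - b))) : ℝ) : ℂ) := by
        push_cast
        rw [← Complex.mul_conj]
        ring
      rw [h2, Complex.ofReal_re]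
    rw [key]
    rw [hB'apply i j, Complex.normSq_conj]
    have hE : Real.exp (-lam i + s * (lam i - lam j))
        = (Real.exp (-(s / 2) * lam j) * Real.exp (-((1 - s) / 2) * lam i)) *
          (Real.exp (-(s / 2) * lam j) * Real.exp (-((1 - s) / 2) * lam i)) := by
      rw [← Real.exp_add, ← Real.exp_add]
      congr 1
      ring
    rw [hE]
    ring
end

section
/- Let Θ(x) = (1 + √π·x·e^{x²}·erfc(−x)) / (e^{x²}·erfc(−x)), where erfc(x) = (2/√π)∫_x^∞ e^{−t²} dt. Then Θ is strictly positive, continuous and strictly monotone increasing on ℝ, Θ(x)/(√π x) → 1 as x → +∞, and Θ(x)·(2|x|/√π) → 1 as x → −∞. -/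
open MeasureTheory Filter

/-- The complementary error function `erfc(x) = (2/√π) ∫_x^∞ e^{-t²} dt`. -/
noncomputable def erfc (x : ℝ) : ℝ :=
  (2 / Real.sqrt Real.pi) * ∫ t in Set.Ici x, Real.exp (-t ^ 2)

/-- `Θ(x) = (1 + √π x e^{x²} erfc(-x)) / (e^{x²} erfc(-x))`. -/
noncomputable def Theta (x : ℝ) : ℝ :=
  (1 + Real.sqrt Real.pi * x * Real.exp (x ^ 2) * erfc (-x)) /
    (Real.exp (x ^ 2) * erfc (-x))

section ThetaAux
open Set
noncomputable def Jf (x : ℝ) : ℝ := ∫ t in Set.Iic x, Real.exp (-t ^ 2)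

lemma integrable_gauss : Integrable (fun t : ℝ => Real.exp (-t ^ 2)) := by
  have := integrable_exp_neg_mul_sq (b := 1) one_pos
  simpa using this

lemma cont_gauss : Continuous (fun t : ℝ => Real.exp (-t ^ 2)) := by fun_prop

lemma Jf_sub (a b : ℝ) : Jf b - Jf a = ∫ t in a..b, Real.exp (-t ^ 2) :=
  intervalIntegral.integral_Iic_sub_Iic integrable_gauss.integrableOn integrable_gauss.integrableOn

lemma hasDerivAt_Jf (x : ℝ) : HasDerivAt Jf (Real.exp (-x ^ 2)) x := by
  have h : HasDerivAt (fun y => Jf 0 + ∫ t in (0:ℝ)..y, Real.exp (-t ^ 2))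
      (Real.exp (-x ^ 2)) x := by
    refine HasDerivAt.const_add _ ?_
    exact intervalIntegral.integral_hasDerivAt_right
      integrable_gauss.intervalIntegrable
      (cont_gauss.aestronglyMeasurable.stronglyMeasurableAtFilter)
      cont_gauss.continuousAt
  refine h.congr_of_eventuallyEq (Eventually.of_forall fun y => ?_)
  have h2 := Jf_sub 0 y
  simp only []
  linarith

lemma Jf_nonneg (x : ℝ) : 0 ≤ Jf x :=
  setIntegral_nonneg measurableSet_Iic fun t _ => (Real.exp_pos _).le

lemma Jf_pos (x : ℝ) : 0 < Jf x := by
  have h := Jf_sub (x - 1) x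
  have hpos : 0 < ∫ t in (x-1)..x, Real.exp (-t ^ 2) :=
    intervalIntegral.intervalIntegral_pos_of_pos
      integrable_gauss.intervalIntegrable (fun t => Real.exp_pos _) (by linarith)
  have := Jf_nonneg (x - 1)
  linarith

lemma Jf_strictMono : StrictMono Jf :=
  strictMono_of_deriv_pos fun x => by
    rw [(hasDerivAt_Jf x).deriv]; exact Real.exp_pos _

lemma Jf_le_exp {x : ℝ} (hx : x ≤ -1) : Jf x ≤ Real.exp x := by
  have h1 : Jf x ≤ ∫ t in Set.Iic x, Real.exp t := by
    refine setIntegral_mono_on integrable_gauss.integrableOn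
      (integrableOn_exp_Iic x) measurableSet_Iic fun t ht => ?_
    have ht' : t ≤ -1 := le_trans ht hx
    exact Real.exp_le_exp.mpr (by nlinarith)
  rw [integral_exp_Iic] at h1
  exact h1

lemma Jf_tendsto_atBot : Tendsto Jf atBot (nhds 0) := by
  refine tendsto_of_tendsto_of_tendsto_of_le_of_le'
    (tendsto_const_nhds (α := ℝ)) Real.tendsto_exp_atBot
    (Eventually.of_forall Jf_nonneg) ?_
  filter_upwards [eventually_le_atBot (-1 : ℝ)] with x hx using Jf_le_exp hx

lemma pos_of_strictMono_tendsto {G : ℝ → ℝ} (hm : StrictMono G)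
    (h0 : Tendsto G atBot (nhds 0)) (x : ℝ) : 0 < G x := by
  have h1 : 0 ≤ G (x - 1) := by
    refine le_of_tendsto h0 ?_
    filter_upwards [eventually_le_atBot (x - 1)] with y hy using hm.monotone hy
  calc (0:ℝ) ≤ G (x - 1) := h1
    _ < G x := hm (by linarith)

lemma nonneg_of_strictMonoOn_tendsto {G : ℝ → ℝ} (hm : StrictMonoOn G (Set.Iio 0))
    (h0 : Tendsto G atBot (nhds 0)) {x : ℝ} (hx : x < 0) : 0 ≤ G x := by
  refine le_of_tendsto h0 ?_
  filter_upwards [eventually_le_atBot x] with y hy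
  rcases eq_or_lt_of_le hy with rfl | hlt
  · exact le_rfl
  · exact (hm (lt_trans hlt hx) hx hlt).le

lemma tendsto_exp_neg_sq_atBot : Tendsto (fun x : ℝ => Real.exp (-x ^ 2)) atBot (nhds 0) := by
  refine tendsto_of_tendsto_of_tendsto_of_le_of_le'
    (tendsto_const_nhds (α := ℝ)) Real.tendsto_exp_atBot
    (Eventually.of_forall fun x => (Real.exp_pos _).le) ?_
  filter_upwards [eventually_le_atBot (-1 : ℝ)] with x hx
  exact Real.exp_le_exp.mpr (by nlinarith)

lemma tendsto_mul_exp_atBot : Tendsto (fun x : ℝ => -x * Real.exp x) atBot (nhds 0) := by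
  have h : Tendsto (fun y : ℝ => y ^ 1 * Real.exp (-y)) atTop (nhds 0) :=
    Real.tendsto_pow_mul_exp_neg_atTop_nhds_zero 1
  have h2 := h.comp tendsto_neg_atBot_atTop
  have h3 : (fun x : ℝ => -x * Real.exp x) = (fun y : ℝ => y ^ 1 * Real.exp (-y)) ∘ Neg.neg := by
    ext x; simp
  rw [h3]; exact h2

lemma hasDerivAt_gauss (x : ℝ) :
    HasDerivAt (fun y : ℝ => Real.exp (-y ^ 2)) (-2 * x * Real.exp (-x ^ 2)) x := by
  have h : HasDerivAt (fun y : ℝ => -y ^ 2) (-(2 * x)) x := by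
    exact (hasDerivAt_pow 2 x).neg.congr_deriv (by simp)
  have h2 := h.exp
  convert h2 using 1; ring

lemma tendsto_sq_atBot : Tendsto (fun x : ℝ => x ^ 2) atBot atTop := by
  have h := (tendsto_pow_atTop (α := ℝ) (n := 2) (by norm_num)).comp tendsto_neg_atBot_atTop
  have h3 : (fun x : ℝ => x ^ 2) = (fun y : ℝ => y ^ 2) ∘ Neg.neg := by
    ext x; simp
  rw [h3]; exact h

lemma tendsto_mul_gauss_atBot : Tendsto (fun x : ℝ => x * Real.exp (-x ^ 2)) atBot (nhds 0) := by
  refine squeeze_zero_norm' ?_ tendsto_mul_exp_atBot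
  filter_upwards [eventually_le_atBot (-1 : ℝ)] with x hx
  have h1 : Real.exp (-x ^ 2) ≤ Real.exp x := Real.exp_le_exp.mpr (by nlinarith)
  have h2 : (0:ℝ) < Real.exp (-x ^ 2) := Real.exp_pos _
  rw [Real.norm_eq_abs, abs_mul, abs_of_nonpos (by linarith : x ≤ 0)]
  have : |Real.exp (-x ^ 2)| = Real.exp (-x ^ 2) := abs_of_pos h2
  rw [this]
  nlinarith [Real.exp_pos x]

noncomputable def Rf (x : ℝ) : ℝ := Jf x + x * Real.exp (-x ^ 2) / (1 + 2 * x ^ 2)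

lemma hasDerivAt_Rf (x : ℝ) :
    HasDerivAt Rf (2 * Real.exp (-x ^ 2) / (1 + 2 * x ^ 2) ^ 2) x := by
  have hden : (1 + 2 * x ^ 2) ≠ 0 := by positivity
  have h1 : HasDerivAt (fun y : ℝ => y * Real.exp (-y ^ 2))
      (1 * Real.exp (-x ^ 2) + x * (-2 * x * Real.exp (-x ^ 2))) x :=
    (hasDerivAt_id x).mul (hasDerivAt_gauss x)
  have h2 : HasDerivAt (fun y : ℝ => 1 + 2 * y ^ 2) (0 + 2 * (2 * x)) x := by
    have := ((hasDerivAt_pow 2 x).const_mul 2).const_add 1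
    simpa using this
  have h3 := h1.div h2 hden
  have h4 := (hasDerivAt_Jf x).add h3
  refine h4.congr_deriv ?_
  field_simp
  ring

lemma Rf_tendsto_atBot : Tendsto Rf atBot (nhds 0) := by
  have h1 : Tendsto (fun x : ℝ => (1 + 2 * x ^ 2)) atBot atTop := by
    apply tendsto_atTop_add_const_left
    exact (tendsto_sq_atBot.const_mul_atTop two_pos)
  have h2 : Tendsto (fun x : ℝ => x * Real.exp (-x ^ 2) / (1 + 2 * x ^ 2)) atBot (nhds 0) := by
    have := tendsto_mul_gauss_atBot.mul h1.inv_tendsto_atTop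
    simpa [div_eq_mul_inv] using this
  have := Jf_tendsto_atBot.add h2
  simp only [add_zero] at this; exact this

lemma Rf_pos (x : ℝ) : 0 < Rf x := by
  refine pos_of_strictMono_tendsto ?_ Rf_tendsto_atBot x
  refine strictMono_of_deriv_pos fun y => ?_
  rw [(hasDerivAt_Rf y).deriv]
  positivity

noncomputable def Tf (x : ℝ) : ℝ := 2 * x * Jf x + Real.exp (-x ^ 2)

lemma hasDerivAt_Tf (x : ℝ) : HasDerivAt Tf (2 * Jf x) x := by
  have h1 : HasDerivAt (fun y : ℝ => 2 * y) 2 x := by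
    simpa using (hasDerivAt_id x).const_mul 2
  have h2 := (h1.mul (hasDerivAt_Jf x)).add (hasDerivAt_gauss x)
  refine h2.congr_deriv ?_
  ring

lemma Tf_tendsto_atBot : Tendsto Tf atBot (nhds 0) := by
  have h1 : Tendsto (fun x : ℝ => 2 * x * Jf x) atBot (nhds 0) := by
    refine squeeze_zero_norm' ?_ (by simpa using tendsto_mul_exp_atBot.const_mul 2)
    filter_upwards [eventually_le_atBot (-1 : ℝ)] with x hx
    have h1 := Jf_le_exp hx
    have h2 := Jf_nonneg x
    rw [Real.norm_eq_abs, abs_mul, abs_of_nonpos (by linarith : 2 * x ≤ 0), abs_of_nonneg h2]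
    nlinarith
  have := h1.add tendsto_exp_neg_sq_atBot
  simp only [add_zero] at this; exact this

lemma Tf_pos (x : ℝ) : 0 < Tf x := by
  refine pos_of_strictMono_tendsto ?_ Tf_tendsto_atBot x
  refine strictMono_of_deriv_pos fun y => ?_
  rw [(hasDerivAt_Tf y).deriv]
  have := Jf_pos y; linarith

noncomputable def Qf (x : ℝ) : ℝ :=
  Jf x ^ 2 - x * Jf x * Real.exp (-x ^ 2) - Real.exp (-x ^ 2) ^ 2 / 2

lemma hasDerivAt_Qf (x : ℝ) :
    HasDerivAt Qf (Real.exp (-x ^ 2) * ((1 + 2 * x ^ 2) * Rf x)) x := by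
  have hJ := hasDerivAt_Jf x
  have hg := hasDerivAt_gauss x
  have h1 := hJ.pow 2
  have h2 := (((hasDerivAt_id x).mul hJ).mul hg)
  have h3 := (hg.pow 2).div_const 2
  have h4 := (h1.sub h2).sub h3
  refine h4.congr_deriv ?_
  have hden : (1 + 2 * x ^ 2) ≠ 0 := by positivity
  simp only [Rf, Pi.mul_apply, id]
  field_simp
  ring

lemma Qf_tendsto_atBot : Tendsto Qf atBot (nhds 0) := by
  have h1 : Tendsto (fun x : ℝ => Jf x ^ 2) atBot (nhds 0) := by
    have := Jf_tendsto_atBot.mul Jf_tendsto_atBot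
    simpa [pow_two] using this
  have h2 : Tendsto (fun x : ℝ => x * Jf x * Real.exp (-x ^ 2)) atBot (nhds 0) := by
    refine squeeze_zero_norm' ?_ tendsto_mul_exp_atBot
    filter_upwards [eventually_le_atBot (-1 : ℝ)] with x hx
    have h1 := Jf_le_exp hx
    have h2 := Jf_nonneg x
    have h3 : Real.exp (-x ^ 2) ≤ 1 := by
      rw [Real.exp_le_one_iff]; nlinarith
    have h4 : (0:ℝ) < Real.exp (-x ^ 2) := Real.exp_pos _
    rw [Real.norm_eq_abs, abs_mul, abs_mul, abs_of_nonpos (by linarith : x ≤ 0),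
      abs_of_nonneg h2, abs_of_pos h4]
    have hx0 : (0:ℝ) ≤ -x := by linarith
    have e1 : -x * Jf x * Real.exp (-x ^ 2) ≤ -x * Jf x := by
      nlinarith [mul_nonneg hx0 h2]
    have e2 : -x * Jf x ≤ -x * Real.exp x := by nlinarith
    linarith
  have h3 : Tendsto (fun x : ℝ => Real.exp (-x ^ 2) ^ 2 / 2) atBot (nhds 0) := by
    have := (tendsto_exp_neg_sq_atBot.mul tendsto_exp_neg_sq_atBot).div_const 2
    simpa [pow_two] using this
  have := (h1.sub h2).sub h3
  simp only [sub_zero] at this; exact this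

lemma Qf_pos (x : ℝ) : 0 < Qf x := by
  refine pos_of_strictMono_tendsto ?_ Qf_tendsto_atBot x
  refine strictMono_of_deriv_pos fun y => ?_
  rw [(hasDerivAt_Qf y).deriv]
  have h1 := Rf_pos y
  positivity

noncomputable def Uf (x : ℝ) : ℝ :=
  Real.exp (-x ^ 2) * ((-(4 * x ^ 4) + 2 * x ^ 2 - 3) / (8 * x ^ 5))

lemma hasDerivAt_Uf {x : ℝ} (hx : x ≠ 0) :
    HasDerivAt Uf (Real.exp (-x ^ 2) * ((8 * x ^ 6 + 15) / (8 * x ^ 6))) x := by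
  have hden : (8 : ℝ) * x ^ 5 ≠ 0 := by
    simp [hx]
  have hnum : HasDerivAt (fun y : ℝ => -(4 * y ^ 4) + 2 * y ^ 2 - 3)
      (-(4 * (4 * x ^ 3)) + 2 * (2 * x)) x := by
    have h1 := ((hasDerivAt_pow 4 x).const_mul 4).neg
    have h2 := (hasDerivAt_pow 2 x).const_mul 2
    have := (h1.add h2).sub_const 3
    exact this.congr_deriv (by ring)
  have hd : HasDerivAt (fun y : ℝ => 8 * y ^ 5) (8 * (5 * x ^ 4)) x := by
    have := (hasDerivAt_pow 5 x).const_mul 8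
    exact this.congr_deriv (by ring)
  have h3 := (hasDerivAt_gauss x).mul (hnum.div hd hden)
  refine h3.congr_deriv ?_
  have hx6 : x ^ 6 ≠ 0 := pow_ne_zero _ hx
  simp only [Pi.div_apply]
  field_simp
  ring

lemma Uf_tendsto_atBot : Tendsto Uf atBot (nhds 0) := by
  refine squeeze_zero_norm' ?_ (by simpa using tendsto_exp_neg_sq_atBot.const_mul 2)
  filter_upwards [eventually_le_atBot (-1 : ℝ)] with x hx
  have h2 : (1:ℝ) ≤ x ^ 2 := by nlinarith
  have h4 : x ^ 2 ≤ x ^ 4 := by nlinarith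
  have h5 : x ^ 5 ≤ -1 := by nlinarith [pow_pos (by nlinarith : (0:ℝ) < x^2) 2]
  have hq : |(-(4 * x ^ 4) + 2 * x ^ 2 - 3) / (8 * x ^ 5)| ≤ 2 := by
    rw [abs_div]
    rw [div_le_iff₀ (by rw [abs_pos]; intro h; linarith : (0:ℝ) < |8 * x ^ 5|)]
    rw [abs_of_nonpos (by nlinarith : -(4 * x ^ 4) + 2 * x ^ 2 - 3 ≤ 0),
      abs_of_nonpos (by nlinarith : 8 * x ^ 5 ≤ 0)]
    nlinarith
  have he : (0:ℝ) < Real.exp (-x ^ 2) := Real.exp_pos _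
  calc ‖Uf x‖ = Real.exp (-x ^ 2) * |(-(4 * x ^ 4) + 2 * x ^ 2 - 3) / (8 * x ^ 5)| := by
        rw [Uf, Real.norm_eq_abs, abs_mul, abs_of_pos he]
    _ ≤ Real.exp (-x ^ 2) * 2 := by nlinarith
    _ = 2 * Real.exp (-x ^ 2) := by ring

lemma Jf_le_Uf {x : ℝ} (hx : x < 0) : Jf x ≤ Uf x := by
  have hmono : StrictMonoOn (fun y => Uf y - Jf y) (Set.Iio 0) := by
    refine strictMonoOn_of_deriv_pos (convex_Iio 0) ?_ ?_
    · intro y hy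
      exact (((hasDerivAt_Uf (ne_of_lt hy)).sub (hasDerivAt_Jf y)).continuousAt).continuousWithinAt
    · intro y hy
      rw [interior_Iio] at hy
      have hy0 : y ≠ 0 := ne_of_lt hy
      rw [((hasDerivAt_Uf hy0).fun_sub (hasDerivAt_Jf y)).deriv]
      have h6 : (0:ℝ) < y ^ 6 := by positivity
      have : Real.exp (-y ^ 2) * ((8 * y ^ 6 + 15) / (8 * y ^ 6)) - Real.exp (-y ^ 2) =
          Real.exp (-y ^ 2) * (15 / (8 * y ^ 6)) := by
        field_simp
        ring
      rw [this]
      positivity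
  have h0 : Tendsto (fun y => Uf y - Jf y) atBot (nhds 0) := by
    have := Uf_tendsto_atBot.sub Jf_tendsto_atBot
    simpa using this
  have := nonneg_of_strictMonoOn_tendsto hmono h0 hx
  linarith

noncomputable def thetaAux (x : ℝ) : ℝ :=
  Real.sqrt Real.pi * x + Real.sqrt Real.pi / 2 * (Real.exp (-x ^ 2) / Jf x)

lemma sqrt_pi_pos : (0:ℝ) < Real.sqrt Real.pi := Real.sqrt_pos.mpr Real.pi_pos

lemma hasDerivAt_thetaAux (x : ℝ) :
    HasDerivAt thetaAux (Real.sqrt Real.pi * Qf x / Jf x ^ 2) x := by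
  have hJ := (Jf_pos x).ne'
  have h1 : HasDerivAt (fun y : ℝ => Real.sqrt Real.pi * y) (Real.sqrt Real.pi) x := by
    simpa using (hasDerivAt_id x).const_mul (Real.sqrt Real.pi)
  have h2 := ((hasDerivAt_gauss x).div (hasDerivAt_Jf x) hJ).const_mul
    (Real.sqrt Real.pi / 2)
  have h3 := h1.add h2
  refine h3.congr_deriv ?_
  simp only [Qf]
  field_simp
  ring

lemma erfc_neg_eq (x : ℝ) : erfc (-x) = 2 / Real.sqrt Real.pi * Jf x := by
  unfold erfc Jf
  congr 1
  have h := integral_comp_neg_Ioi (-x) (fun t : ℝ => Real.exp (-t ^ 2))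
  simp only [neg_neg, neg_sq] at h
  rw [integral_Ici_eq_integral_Ioi, h]

lemma Theta_eq : Theta = thetaAux := by
  funext x
  have hs : Real.sqrt Real.pi ≠ 0 := sqrt_pi_pos.ne'
  have hJ : Jf x ≠ 0 := (Jf_pos x).ne'
  have hE : Real.exp (x ^ 2) ≠ 0 := (Real.exp_pos _).ne'
  unfold Theta thetaAux
  rw [erfc_neg_eq, Real.exp_neg]
  field_simp
  ring

lemma thetaAux_pos (x : ℝ) : 0 < thetaAux x := by
  have hJ := Jf_pos x
  have hT := Tf_pos x
  have h : thetaAux x = Real.sqrt Real.pi * Tf x / (2 * Jf x) := by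
    unfold thetaAux Tf
    field_simp
  rw [h]
  exact div_pos (mul_pos sqrt_pi_pos hT) (by linarith)

lemma thetaAux_strictMono : StrictMono thetaAux :=
  strictMono_of_deriv_pos fun x => by
    rw [(hasDerivAt_thetaAux x).deriv]
    exact div_pos (mul_pos sqrt_pi_pos (Qf_pos x)) (pow_pos (Jf_pos x) 2)

lemma theta_tendsto_atTop :
    Tendsto (fun x => thetaAux x / (Real.sqrt Real.pi * x)) atTop (nhds 1) := by
  have h0 : Tendsto (fun x : ℝ => Real.exp (-x ^ 2) / (2 * x * Jf x)) atTop (nhds 0) := by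
    refine tendsto_of_tendsto_of_tendsto_of_le_of_le' tendsto_const_nhds
      (by simpa using Real.tendsto_exp_neg_atTop_nhds_zero.div_const (2 * Jf 0)) ?_ ?_
    · filter_upwards [eventually_ge_atTop (1:ℝ)] with x hx
      have := Jf_pos x
      have : (0:ℝ) < 2 * x * Jf x := by nlinarith
      positivity
    · filter_upwards [eventually_ge_atTop (1:ℝ)] with x hx
      have hJm : Jf 0 ≤ Jf x := Jf_strictMono.monotone (by linarith)
      have hJ0 := Jf_pos 0
      have hJx := Jf_pos x
      refine div_le_div₀ (Real.exp_pos _).le (Real.exp_le_exp.mpr (by nlinarith)) (by linarith) ?_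
      nlinarith
  have h1 : Tendsto (fun x : ℝ => 1 + Real.exp (-x ^ 2) / (2 * x * Jf x)) atTop
      (nhds 1) := by
    have := (tendsto_const_nhds : Tendsto (fun _ : ℝ => (1:ℝ)) atTop (nhds 1)).add h0
    simpa using this
  refine Tendsto.congr' ?_ h1
  filter_upwards [eventually_ge_atTop (1:ℝ)] with x hx
  have hx0 : x ≠ 0 := by intro h; rw [h] at hx; norm_num at hx
  have hJ := (Jf_pos x).ne'
  have hs := sqrt_pi_pos.ne'
  unfold thetaAux
  field_simp

lemma ell_tendsto :
    Tendsto (fun x : ℝ => (4 * x ^ 4 - 6 * x ^ 2) / (4 * x ^ 4 - 2 * x ^ 2 + 3)) atBot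
      (nhds 1) := by
  have hi : Tendsto (fun x : ℝ => (x ^ 2)⁻¹) atBot (nhds 0) :=
    tendsto_sq_atBot.inv_tendsto_atTop
  have hnum : Tendsto (fun x : ℝ => 4 - 6 * (x ^ 2)⁻¹) atBot (nhds (4 - 6 * 0)) :=
    tendsto_const_nhds.sub (hi.const_mul 6)
  have hden : Tendsto (fun x : ℝ => 4 - 2 * (x ^ 2)⁻¹ + 3 * ((x ^ 2)⁻¹ * (x ^ 2)⁻¹)) atBot
      (nhds (4 - 2 * 0 + 3 * (0 * 0))) :=
    (tendsto_const_nhds.sub (hi.const_mul 2)).add ((hi.mul hi).const_mul 3)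
  norm_num at hnum hden
  have h := hnum.div hden (by norm_num)
  norm_num at h
  refine Tendsto.congr' ?_ h
  filter_upwards [eventually_le_atBot (-1:ℝ)] with x hx
  simp only [Pi.div_apply]
  have hx2 : x ^ 2 ≠ 0 := ne_of_gt (by nlinarith)
  have hd : (4 * x ^ 4 - 2 * x ^ 2 + 3) ≠ 0 := ne_of_gt (by nlinarith [sq_nonneg (2 * x ^ 2 - 1)])
  have hx0 : x ≠ 0 := by intro h; rw [h] at hx; norm_num at hx
  have hx4 : x ^ 4 ≠ 0 := pow_ne_zero _ hx0
  have e2 : 4 - 6 * (x ^ 2)⁻¹ = (4 * x ^ 4 - 6 * x ^ 2) / x ^ 4 := by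
    field_simp
  have e1 : 4 - 2 * (x ^ 2)⁻¹ + 3 * ((x ^ 2)⁻¹ * (x ^ 2)⁻¹) =
      (4 * x ^ 4 - 2 * x ^ 2 + 3) / x ^ 4 := by
    field_simp
  rw [e1, e2, div_div_div_cancel_right₀]
  exact hx4

lemma E_repr {x : ℝ} (hx : x < 0) :
    Theta x * (2 * |x| / Real.sqrt Real.pi) =
      -2 * x ^ 2 + (-x) * Real.exp (-x ^ 2) / Jf x := by
  rw [Theta_eq]
  unfold thetaAux
  rw [abs_of_neg hx]
  have hs := sqrt_pi_pos.ne'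
  have hJ := (Jf_pos x).ne'
  field_simp
  ring

lemma E_le_one {x : ℝ} (hx : x < 0) :
    Theta x * (2 * |x| / Real.sqrt Real.pi) ≤ 1 := by
  rw [E_repr hx]
  have hJ := Jf_pos x
  have hden : (0:ℝ) < 1 + 2 * x ^ 2 := by positivity
  have hR := Rf_pos x
  have e1 : x * Real.exp (-x ^ 2) / (1 + 2 * x ^ 2) =
      -((-x) * Real.exp (-x ^ 2) / (1 + 2 * x ^ 2)) := by ring
  have h0 : (-x) * Real.exp (-x ^ 2) / (1 + 2 * x ^ 2) < Jf x := by
    have : Rf x = Jf x + x * Real.exp (-x ^ 2) / (1 + 2 * x ^ 2) := rfl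
    rw [this, e1] at hR
    linarith
  have h1 : (-x) * Real.exp (-x ^ 2) < Jf x * (1 + 2 * x ^ 2) :=
    (div_lt_iff₀ hden).mp h0
  have h2 : (-x) * Real.exp (-x ^ 2) / Jf x < 1 + 2 * x ^ 2 :=
    (div_lt_iff₀ hJ).mpr (by linarith)
  linarith

lemma ell_le_E {x : ℝ} (hx : x ≤ -1) :
    (4 * x ^ 4 - 6 * x ^ 2) / (4 * x ^ 4 - 2 * x ^ 2 + 3) ≤
      Theta x * (2 * |x| / Real.sqrt Real.pi) := by
  have hx0 : x < 0 := by linarith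
  rw [E_repr hx0]
  have hJ := Jf_pos x
  have hJU := Jf_le_Uf hx0
  have hU : 0 < Uf x := lt_of_lt_of_le hJ hJU
  have hxe : (0:ℝ) ≤ (-x) * Real.exp (-x ^ 2) := by
    have := (Real.exp_pos (-x ^ 2)).le
    nlinarith
  have h1 : (-x) * Real.exp (-x ^ 2) / Uf x ≤ (-x) * Real.exp (-x ^ 2) / Jf x := by
    gcongr
  have hx5 : x ^ 5 ≠ 0 := pow_ne_zero _ (ne_of_lt hx0)
  have hd : (4 * x ^ 4 - 2 * x ^ 2 + 3) ≠ 0 :=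
    ne_of_gt (by nlinarith [sq_nonneg (2 * x ^ 2 - 1)])
  have h2 : (-x) * Real.exp (-x ^ 2) / Uf x =
      (4 * x ^ 4 - 6 * x ^ 2) / (4 * x ^ 4 - 2 * x ^ 2 + 3) + 2 * x ^ 2 := by
    have he := (Real.exp_pos (-x ^ 2)).ne'
    have hN : -(4 * x ^ 4) + 2 * x ^ 2 - 3 ≠ 0 := ne_of_lt (by nlinarith [sq_nonneg (2 * x ^ 2 - 1)])
    unfold Uf
    field_simp
    have k1 : x ^ 2 * (-(x ^ 2 * 4) + 2) - 3 ≠ 0 := by contrapose! hN; linarith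
    have k2 : x ^ 2 * (x ^ 2 * 4 - 2) + 3 ≠ 0 := by contrapose! hd; linarith
    field_simp
    ring
  linarith

end ThetaAux

/-- `Θ` is strictly positive, continuous and strictly increasing on `ℝ`,
`Θ(x) ≃ √π x` as `x → +∞` and `Θ(x) ≃ √π/(2|x|)` as `x → -∞`. -/
theorem stmt_16 :
    (∀ x : ℝ, 0 < Theta x) ∧ Continuous Theta ∧ StrictMono Theta ∧
      Tendsto (fun x => Theta x / (Real.sqrt Real.pi * x)) atTop (nhds 1) ∧
      Tendsto (fun x => Theta x * (2 * |x| / Real.sqrt Real.pi)) atBot (nhds 1) := by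
  refine ⟨?_, ?_, ?_, ?_, ?_⟩
  · intro x; rw [Theta_eq]; exact thetaAux_pos x
  · rw [Theta_eq]
    exact continuous_iff_continuousAt.mpr fun x => (hasDerivAt_thetaAux x).continuousAt
  · rw [Theta_eq]; exact thetaAux_strictMono
  · rw [Theta_eq]; exact theta_tendsto_atTop
  · refine tendsto_of_tendsto_of_tendsto_of_le_of_le' ell_tendsto
      (tendsto_const_nhds (α := ℝ)) ?_ ?_
    · filter_upwards [eventually_le_atBot (-1:ℝ)] with x hx using ell_le_E hx
    · filter_upwards [eventually_le_atBot (-1:ℝ)] with x hx using E_le_one (by linarith)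
end

section
/- Let X_j be nonnegative real random variables with means m_j and standard deviations σ_j, set X̃_j = (X_j − m_j)/σ_j, and assume σ_j → ∞, m_j/σ_j² → 0, and limsup_j E[exp(λ|X̃_j|)] ≤ C for all 0 < λ < λ₀. Let Y_j be randomized Poisson variables with P(Y_j = n) = E[X_j^n e^{−X_j}]/n! and Ỹ_j = (Y_j − m_j)/σ_j. Then for every t ∈ ℝ, |E[e^{itỸ_j}] − E[e^{itX̃_j}]| → 0 as j → ∞. -/
open MeasureTheory Filter

-- Lipschitz-type bound for exp on the left half-plane
lemma aux_exp_lip {z w : ℂ} (hz : z.re ≤ 0) (hw : w.re ≤ 0) :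
    ‖Complex.exp z - Complex.exp w‖ ≤ ‖z - w‖ := by
  have hd : ∀ u ∈ Set.uIcc (0:ℝ) 1,
      HasDerivAt (fun u : ℝ => Complex.exp (w + u * (z - w)))
        (Complex.exp (w + u * (z - w)) * (z - w)) u := by
    intro u _
    have h0 : HasDerivAt (fun u : ℝ => ((u : ℂ))) 1 u := (hasDerivAt_id u).ofReal_comp
    have h1 : HasDerivAt (fun u : ℝ => w + (u:ℂ) * (z - w)) (1 * (z - w)) u :=
      (h0.mul_const (z - w)).const_add w
    simpa using h1.cexp
  have hint : IntervalIntegrable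
      (fun u : ℝ => Complex.exp (w + u * (z - w)) * (z - w)) MeasureTheory.volume 0 1 := by
    apply Continuous.intervalIntegrable
    fun_prop
  have key := intervalIntegral.integral_eq_sub_of_hasDerivAt hd hint
  have h10 : Complex.exp z - Complex.exp w
      = ∫ u in (0:ℝ)..1, Complex.exp (w + u * (z - w)) * (z - w) := by
    rw [key]; norm_num
  rw [h10]
  have hb : ∀ u ∈ Set.uIoc (0:ℝ) 1,
      ‖Complex.exp (w + u * (z - w)) * (z - w)‖ ≤ ‖z - w‖ := by
    intro u hu
    rw [Set.uIoc_of_le (by norm_num : (0:ℝ) ≤ 1)] at hu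
    have hre : (w + (u:ℂ) * (z - w)).re ≤ 0 := by
      have : (w + (u:ℂ) * (z - w)).re = w.re + u * (z.re - w.re) := by
        simp [Complex.add_re, Complex.mul_re, Complex.ofReal_re, Complex.ofReal_im,
          Complex.sub_re, Complex.sub_im]
      rw [this]
      nlinarith [hu.1, hu.2]
    have : ‖Complex.exp (w + u * (z - w))‖ ≤ 1 := by
      rw [Complex.norm_exp]
      exact Real.exp_le_one_iff.mpr hre
    calc ‖Complex.exp (w + u * (z - w)) * (z - w)‖
        = ‖Complex.exp (w + u * (z - w))‖ * ‖z - w‖ := norm_mul _ _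
      _ ≤ 1 * ‖z - w‖ := by
          exact mul_le_mul_of_nonneg_right this (norm_nonneg _)
      _ = ‖z - w‖ := one_mul _
  calc ‖∫ u in (0:ℝ)..1, Complex.exp (w + u * (z - w)) * (z - w)‖
      ≤ ‖z - w‖ * |1 - 0| := intervalIntegral.norm_integral_le_of_norm_le_const hb
    _ = ‖z - w‖ := by norm_num

-- pointwise bound: x^n e^{-x} ≤ n!
lemma aux_pow_exp_le (x : ℝ) (hx : 0 ≤ x) (n : ℕ) :
    x ^ n * Real.exp (-x) / n.factorial ≤ 1 := by
  have h1 : x ^ n / n.factorial ≤ Real.exp x := by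
    calc x ^ n / n.factorial ≤ ∑ i ∈ Finset.range (n+1), x ^ i / i.factorial := by
          refine Finset.single_le_sum (f := fun i => x ^ i / (i.factorial : ℝ)) ?_ ?_
          · intro i _; positivity
          · exact Finset.self_mem_range_succ n
      _ ≤ Real.exp x := Real.sum_le_exp_of_nonneg hx _
  have h2 : Real.exp (-x) > 0 := Real.exp_pos _
  have := mul_le_mul_of_nonneg_right h1 h2.le
  rw [← Real.exp_add, add_neg_cancel, Real.exp_zero] at this
  calc x ^ n * Real.exp (-x) / n.factorial
      = x ^ n / n.factorial * Real.exp (-x) := by ring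
    _ ≤ 1 := this

lemma aux_tsum_eq_integral {Ω : Type*} [MeasurableSpace Ω] (P : Measure Ω)
    [IsProbabilityMeasure P] (X : Ω → ℝ) (hX : Measurable X) (hXnn : ∀ ω, 0 ≤ X ω)
    (s mm : ℝ) :
    (∑' n : ℕ, (((∫ ω, X ω ^ n * Real.exp (-X ω) ∂P) / (n.factorial : ℝ) : ℝ) : ℂ) *
        Complex.exp (Complex.I * Complex.ofReal (s * n - s * mm))) =
    ∫ ω, Complex.exp ((Complex.exp (Complex.I * s) - 1) * X ω
        - Complex.I * Complex.ofReal (s * mm)) ∂P := by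
  set f : ℕ → Ω → ℂ := fun n ω => ((X ω ^ n * Real.exp (-X ω) : ℝ) : ℂ) *
    (Complex.exp (Complex.I * Complex.ofReal (s * n - s * mm)) / (n.factorial : ℂ)) with hf
  have hmeasf : ∀ n, AEStronglyMeasurable (f n) P := by
    intro n
    apply Measurable.aestronglyMeasurable
    fun_prop
  -- norm of f
  have hnorm : ∀ n ω, ‖f n ω‖ = X ω ^ n * Real.exp (-X ω) / n.factorial := by
    intro n ω
    rw [hf]
    simp only [norm_mul, norm_div, Complex.norm_real, Real.norm_eq_abs, Complex.norm_exp]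
    have h1 : (Complex.I * Complex.ofReal (s * n - s * mm)).re = 0 := by simp
    rw [h1, Real.exp_zero]
    have h2 : |X ω ^ n * Real.exp (-X ω)| = X ω ^ n * Real.exp (-X ω) :=
      abs_of_nonneg (mul_nonneg (pow_nonneg (hXnn ω) n) (Real.exp_pos _).le)
    have h3 : ‖(n.factorial : ℂ)‖ = (n.factorial : ℝ) := by
      rw [show ((n.factorial : ℕ) : ℂ) = ((n.factorial : ℝ) : ℂ) by push_cast; ring,
        Complex.norm_real, Real.norm_eq_abs, abs_of_nonneg (by positivity)]
    rw [← abs_mul, h2, h3]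
    ring
  -- real summability and sum
  have hsum_real : ∀ ω, HasSum (fun n : ℕ => X ω ^ n * Real.exp (-X ω) / n.factorial) 1 := by
    intro ω
    have h1 : HasSum (fun n : ℕ => X ω ^ n / n.factorial) (Real.exp (X ω)) := by
      rw [Real.exp_eq_exp_ℝ, NormedSpace.exp_eq_tsum_div]
      exact (Real.summable_pow_div_factorial (X ω)).hasSum
    have h2 := h1.mul_right (Real.exp (-X ω))
    rw [← Real.exp_add, add_neg_cancel, Real.exp_zero] at h2
    convert h2 using 2 with n
    case e'_3 => rfl
    ring
  -- lintegral sum condition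
  have hcond : (∑' n : ℕ, ∫⁻ ω, ‖f n ω‖₊ ∂P) ≠ ⊤ := by
    have hmeas' : ∀ n : ℕ, AEMeasurable (fun ω => (‖f n ω‖₊ : ENNReal)) P :=
      fun n => (hmeasf n).enorm
    rw [← lintegral_tsum hmeas']
    have hptw : ∀ ω, (∑' n : ℕ, (‖f n ω‖₊ : ENNReal)) = 1 := by
      intro ω
      have he : ∀ n : ℕ, (‖f n ω‖₊ : ENNReal)
          = ENNReal.ofReal (X ω ^ n * Real.exp (-X ω) / n.factorial) := by
        intro n
        rw [← hnorm n ω]; exact (ofReal_norm_eq_enorm _).symm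
      simp_rw [he]
      rw [← ENNReal.ofReal_tsum_of_nonneg (fun n => div_nonneg (mul_nonneg (pow_nonneg (hXnn ω) n) (Real.exp_pos _).le) (by positivity))
        (hsum_real ω).summable, (hsum_real ω).tsum_eq, ENNReal.ofReal_one]
    simp_rw [hptw]
    simp
  -- pointwise sum of f
  have hptsum : ∀ ω, (∑' n : ℕ, f n ω)
      = Complex.exp ((Complex.exp (Complex.I * s) - 1) * X ω
          - Complex.I * Complex.ofReal (s * mm)) := by
    intro ω
    have hterm : ∀ n : ℕ, f n ω = ((X ω : ℂ) * Complex.exp (Complex.I * s)) ^ n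
        / (n.factorial : ℂ)
        * (Complex.exp (-(X ω : ℂ)) * Complex.exp (-(Complex.I * Complex.ofReal (s * mm)))) := by
      intro n
      simp only [hf]
      have h1 : Complex.exp (Complex.I * Complex.ofReal (s * n - s * mm))
          = Complex.exp (Complex.I * s) ^ n * Complex.exp (-(Complex.I * Complex.ofReal (s * mm))) := by
        rw [← Complex.exp_nat_mul, ← Complex.exp_add]
        congr 1
        push_cast
        ring
      rw [h1]
      push_cast [Complex.ofReal_exp]
      rw [mul_pow]
      ring
    simp_rw [hterm]
    rw [tsum_mul_right]
    have hsum : (∑' n : ℕ, ((X ω : ℂ) * Complex.exp (Complex.I * s)) ^ n / (n.factorial : ℂ))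
        = Complex.exp ((X ω : ℂ) * Complex.exp (Complex.I * s)) := by
      rw [Complex.exp_eq_exp_ℂ, NormedSpace.exp_eq_tsum_div]
    rw [hsum, ← Complex.exp_add, ← Complex.exp_add]
    congr 1
    ring
  have hswap := integral_tsum hmeasf hcond
  have hint_n : ∀ n : ℕ, ∫ ω, f n ω ∂P
      = (((∫ ω, X ω ^ n * Real.exp (-X ω) ∂P) / (n.factorial : ℝ) : ℝ) : ℂ) *
          Complex.exp (Complex.I * Complex.ofReal (s * n - s * mm)) := by
    intro n
    simp only [hf]
    rw [integral_mul_const]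
    have : (∫ a, ((X a ^ n * Real.exp (-X a) : ℝ) : ℂ) ∂P)
        = ((∫ a, X a ^ n * Real.exp (-X a) ∂P : ℝ) : ℂ) := integral_ofReal
    rw [this]
    push_cast
    ring
  calc (∑' n : ℕ, (((∫ ω, X ω ^ n * Real.exp (-X ω) ∂P) / (n.factorial : ℝ) : ℝ) : ℂ) *
        Complex.exp (Complex.I * Complex.ofReal (s * n - s * mm)))
      = ∑' n : ℕ, ∫ ω, f n ω ∂P := by
        exact tsum_congr fun n => (hint_n n).symm
    _ = ∫ ω, ∑' n : ℕ, f n ω ∂P := hswap.symm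
    _ = ∫ ω, Complex.exp ((Complex.exp (Complex.I * s) - 1) * X ω
          - Complex.I * Complex.ofReal (s * mm)) ∂P :=
        integral_congr_ae (Eventually.of_forall fun ω => hptsum ω)

/-- Characteristic-function comparison for standardized mixed Poisson variables. -/

theorem stmt_17 {Ω : Type*} [MeasurableSpace Ω] (P : Measure Ω) [IsProbabilityMeasure P]
    (X : ℕ → Ω → ℝ) (m σ : ℕ → ℝ) (C lam₀ : ℝ) (hlam₀ : 0 < lam₀)
    (hmeas : ∀ j, Measurable (X j))
    (hnonneg : ∀ j ω, 0 ≤ X j ω)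
    (hm : ∀ j, m j = ∫ ω, X j ω ∂P)
    (hσpos : ∀ j, 0 < σ j)
    (hσ : ∀ j, σ j ^ 2 = ∫ ω, (X j ω - m j) ^ 2 ∂P)
    (hσtop : Tendsto σ atTop atTop)
    (hmσ : Tendsto (fun j => m j / σ j ^ 2) atTop (nhds 0))
    (hexp : ∀ lam : ℝ, 0 < lam → lam < lam₀ →
      limsup (fun j => ∫ ω, Real.exp (lam * |(X j ω - m j) / σ j|) ∂P) atTop ≤ C) :
    ∀ t : ℝ, Tendsto (fun j =>
        ‖(∑' n : ℕ, (((∫ ω, X j ω ^ n * Real.exp (-X j ω) ∂P) / (n.factorial : ℝ) : ℝ) : ℂ) *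
              Complex.exp (Complex.I * Complex.ofReal (t * (((n : ℝ) - m j) / σ j)))) -
          ∫ ω, Complex.exp (Complex.I * Complex.ofReal (t * ((X j ω - m j) / σ j))) ∂P‖)
      atTop (nhds 0) := by
  intro t
  have hbound : Tendsto (fun j => t ^ 2 * (m j / σ j ^ 2)) atTop (nhds 0) := by
    simpa using hmσ.const_mul (t ^ 2)
  refine squeeze_zero' (Eventually.of_forall fun j => norm_nonneg _) ?_ hbound
  filter_upwards [hσtop.eventually_ge_atTop (max 1 |t|)] with j hj
  have hσne : σ j ≠ 0 := (hσpos j).ne'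
  set s : ℝ := t / σ j with hs
  have hsle : |s| ≤ 1 := by
    rw [hs, abs_div, abs_of_pos (hσpos j), div_le_one (hσpos j)]
    exact le_trans (le_max_right 1 |t|) hj
  -- integrability of X j
  have hsq_int : Integrable (fun ω => (X j ω - m j) ^ 2) P := by
    by_contra hc
    have h0 := integral_undef hc
    rw [← hσ j] at h0
    exact absurd h0 (by positivity)
  have hX_int : Integrable (X j) P := by
    apply Integrable.mono' (hsq_int.add (integrable_const (1 + |m j|)))
      (hmeas j).aestronglyMeasurable
    filter_upwards with ω
    simp only [Pi.add_apply]
    rw [Real.norm_eq_abs, abs_of_nonneg (hnonneg j ω)]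
    nlinarith [sq_nonneg (X j ω - m j - 1), le_abs_self (m j), sq_nonneg (X j ω - m j)]
  -- g and h
  set E : ℂ := Complex.exp (Complex.I * (s : ℂ)) with hE
  set g : Ω → ℂ := fun ω => Complex.exp ((E - 1) * X j ω - Complex.I * Complex.ofReal (s * m j))
    with hg
  set h : Ω → ℂ := fun ω =>
    Complex.exp (Complex.I * Complex.ofReal (t * ((X j ω - m j) / σ j))) with hh
  have hEre : E.re = Real.cos s := by
    rw [hE, Complex.exp_re]
    simp
  have hre_g : ∀ ω, ((E - 1) * (X j ω : ℂ) - Complex.I * Complex.ofReal (s * m j)).re ≤ 0 := by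
    intro ω
    have : ((E - 1) * (X j ω : ℂ) - Complex.I * Complex.ofReal (s * m j)).re
        = (Real.cos s - 1) * X j ω := by
      simp [Complex.sub_re, Complex.mul_re, Complex.sub_im, hEre]
    rw [this]
    nlinarith [Real.cos_le_one s, hnonneg j ω]
  have hg_int : Integrable g P := by
    apply Integrable.mono' (integrable_const (1:ℝ))
    · apply Measurable.aestronglyMeasurable
      rw [hg]; fun_prop
    · filter_upwards with ω
      rw [hg]
      simp only [Complex.norm_exp]
      exact Real.exp_le_one_iff.mpr (hre_g ω)
  have hh_norm : ∀ ω, ‖h ω‖ = 1 := by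
    intro ω
    rw [hh]
    simp only [Complex.norm_exp]
    have : (Complex.I * Complex.ofReal (t * ((X j ω - m j) / σ j))).re = 0 := by simp
    rw [this, Real.exp_zero]
  have hh_int : Integrable h P := by
    apply Integrable.mono' (integrable_const (1:ℝ))
    · apply Measurable.aestronglyMeasurable
      rw [hh]; fun_prop
    · filter_upwards with ω
      rw [hh_norm ω]
  -- identify the tsum with ∫ g
  have harg : ∀ n : ℕ, t * (((n : ℝ) - m j) / σ j) = s * n - s * m j := by
    intro n; rw [hs]; field_simp
  have h1 : (∑' n : ℕ, (((∫ ω, X j ω ^ n * Real.exp (-X j ω) ∂P) / (n.factorial : ℝ) : ℝ) : ℂ) *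
        Complex.exp (Complex.I * Complex.ofReal (t * (((n : ℝ) - m j) / σ j)))) = ∫ ω, g ω ∂P := by
    calc (∑' n : ℕ, (((∫ ω, X j ω ^ n * Real.exp (-X j ω) ∂P) / (n.factorial : ℝ) : ℝ) : ℂ) *
        Complex.exp (Complex.I * Complex.ofReal (t * (((n : ℝ) - m j) / σ j))))
        = ∑' n : ℕ, (((∫ ω, X j ω ^ n * Real.exp (-X j ω) ∂P) / (n.factorial : ℝ) : ℝ) : ℂ) *
            Complex.exp (Complex.I * Complex.ofReal (s * n - s * m j)) :=
          tsum_congr fun n => by rw [harg n]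
      _ = ∫ ω, g ω ∂P := aux_tsum_eq_integral P (X j) (hmeas j) (hnonneg j) s (m j)
  rw [h1, ← integral_sub hg_int hh_int]
  -- pointwise bound
  have hptw : ∀ ω, ‖g ω - h ω‖ ≤ t ^ 2 / σ j ^ 2 * X j ω := by
    intro ω
    have hwre : (Complex.I * Complex.ofReal (t * ((X j ω - m j) / σ j))).re = 0 := by simp
    have hlip := aux_exp_lip (hre_g ω) (le_of_eq hwre)
    rw [hg, hh]
    refine le_trans hlip ?_
    have hargω : t * ((X j ω - m j) / σ j) = s * X j ω - s * m j := by
      rw [hs]; field_simp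
    have hdiff : ((E - 1) * (X j ω : ℂ) - Complex.I * Complex.ofReal (s * m j)) -
        Complex.I * Complex.ofReal (t * ((X j ω - m j) / σ j))
        = (E - 1 - Complex.I * (s : ℂ)) * (X j ω : ℂ) := by
      rw [hargω]
      push_cast
      ring
    rw [hdiff, norm_mul, Complex.norm_real, Real.norm_eq_abs,
      abs_of_nonneg (hnonneg j ω)]
    have hz : ‖Complex.I * (s : ℂ)‖ = |s| := by
      simp [map_mul]
    have hble := Complex.norm_exp_sub_one_sub_id_le (x := Complex.I * (s : ℂ)) (by rw [hz]; exact hsle)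
    rw [hz] at hble
    have : ‖E - 1 - Complex.I * (s : ℂ)‖ ≤ t ^ 2 / σ j ^ 2 := by
      rw [hE]
      refine le_trans hble ?_
      rw [sq_abs, hs]
      rw [div_pow]
    exact mul_le_mul_of_nonneg_right this (hnonneg j ω)
  calc ‖∫ ω, (g ω - h ω) ∂P‖
      ≤ ∫ ω, ‖g ω - h ω‖ ∂P := norm_integral_le_integral_norm _
    _ ≤ ∫ ω, t ^ 2 / σ j ^ 2 * X j ω ∂P := by
        refine integral_mono ((hg_int.sub hh_int).norm) (hX_int.const_mul _) hptw
    _ = t ^ 2 / σ j ^ 2 * ∫ ω, X j ω ∂P := integral_const_mul _ _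
    _ = t ^ 2 * (m j / σ j ^ 2) := by rw [← hm j]; ring
end
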